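/- Let G be a group with trivial center and let m ≥ 1. Then every automorphism φ of G × ℤ^m has the form φ(g, v) = (ψ(g), α(g) + L v) for all (g, v) ∈ G × ℤ^m, where ψ is an automorphism of G, L is an automorphism of ℤ^m, and α : G → ℤ^m is a homomorphism. -/

import Mathlib

section Aux

variable {G : Type*} [Group G] {A : Type*} [CommGroup A]

/-- If `G` is centerless, any automorphism of `G × A` (A abelian) sends `(1, v)` to
an element with trivial first component. -/
lemma aux_cent_first (hG : Subgroup.center G = ⊥)
    (θ : (G × A) ≃* (G × A)) (v : A) : (θ (1, v)).1 = 1 := by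
  have hc : θ (1, v) ∈ Subgroup.center (G × A) := by
    rw [Subgroup.mem_center_iff]
    intro h
    have : θ.symm h * (1, v) = (1, v) * θ.symm h := by
      ext
      · simp
      · simp [mul_comm]
    calc h * θ (1, v) = θ (θ.symm h * (1, v)) := by simp
      _ = θ ((1, v) * θ.symm h) := by rw [this]
      _ = θ (1, v) * h := by simp
  rw [Subgroup.mem_center_iff] at hc
  have h1 : (θ (1, v)).1 ∈ Subgroup.center G := by
    rw [Subgroup.mem_center_iff]
    intro h
    have := hc (h, 1)
    exact congrArg Prod.fst this
  rw [hG] at h1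
  simpa using h1

end Aux

/-- If `G` is centerless, then every automorphism `φ` of `G × ℤᵐ` (`m ≥ 1`) has the form
`φ(g, v) = (ψ(g), α(g) + L v)` for an automorphism `ψ` of `G`, an automorphism `L` of `ℤᵐ`,
and a homomorphism `α : G → ℤᵐ`.  (Here `ℤᵐ` is written multiplicatively.) -/
theorem aut_of_prod_int_pow_of_centerless {G : Type*} [Group G]
    (hG : Subgroup.center G = ⊥) (m : ℕ) (hm : 1 ≤ m)
    (φ : (G × Multiplicative (Fin m → ℤ)) ≃* (G × Multiplicative (Fin m → ℤ))) :
    ∃ (ψ : G ≃* G) (L : Multiplicative (Fin m → ℤ) ≃* Multiplicative (Fin m → ℤ))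
      (α : G →* Multiplicative (Fin m → ℤ)),
      ∀ (g : G) (v : Multiplicative (Fin m → ℤ)), φ (g, v) = (ψ g, α g * L v) := by
  set A := Multiplicative (Fin m → ℤ)
  have h1 : ∀ v : A, (φ (1, v)).1 = 1 := aux_cent_first hG φ
  have h1' : ∀ v : A, (φ.symm (1, v)).1 = 1 := aux_cent_first hG φ.symm
  -- φ (1, v) = (1, (φ (1,v)).2)
  have hφ1 : ∀ v : A, φ (1, v) = (1, (φ (1, v)).2) := fun v => Prod.ext (h1 v) rfl
  have hφ1' : ∀ v : A, φ.symm (1, v) = (1, (φ.symm (1, v)).2) :=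
    fun v => Prod.ext (h1' v) rfl
  refine ⟨{ toFun := fun g => (φ (g, 1)).1
            invFun := fun g => (φ.symm (g, 1)).1
            left_inv := ?_
            right_inv := ?_
            map_mul' := ?_ },
    { toFun := fun v => (φ (1, v)).2
      invFun := fun w => (φ.symm (1, w)).2
      left_inv := ?_
      right_inv := ?_
      map_mul' := ?_ },
    { toFun := fun g => (φ (g, 1)).2
      map_one' := by
        show (φ ((1 : G), (1 : A))).2 = 1
        rw [← Prod.one_eq_mk, map_one]; rfl
      map_mul' := by
        intro g h
        show (φ ((g*h : G), (1:A))).2 = (φ (g,1)).2 * (φ (h,1)).2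
        have : ((g * h : G), (1 : A)) = (g, (1 : A)) * (h, 1) := by simp
        rw [this, map_mul]; rfl }, ?_⟩
  · -- left_inv for ψ
    intro g
    have key : φ.symm ((φ (g, 1)).1, 1) =
        (g, 1) * φ.symm (1, ((φ (g, 1)).2)⁻¹) := by
      rw [← φ.symm_apply_apply (g, 1), ← map_mul]
      congr 1
      ext
      · simp
      · simp
    show (φ.symm ((φ (g, 1)).1, 1)).1 = g
    rw [key]
    have := h1' (((φ (g, 1)).2)⁻¹)
    simp [Prod.fst_mul, this]
  · -- right_inv for ψ
    intro g
    have key : φ ((φ.symm (g, 1)).1, 1) =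
        (g, 1) * φ (1, ((φ.symm (g, 1)).2)⁻¹) := by
      rw [← φ.apply_symm_apply (g, 1), ← map_mul]
      congr 1
      ext
      · simp
      · simp
    show (φ ((φ.symm (g, 1)).1, 1)).1 = g
    rw [key]
    have := h1 (((φ.symm (g, 1)).2)⁻¹)
    simp [Prod.fst_mul, this]
  · -- map_mul for ψ
    intro g h
    show (φ ((g*h : G), (1:A))).1 = (φ (g,1)).1 * (φ (h,1)).1
    have : ((g * h : G), (1 : A)) = (g, (1 : A)) * (h, 1) := by simp
    rw [this, map_mul]; rfl
  · -- left_inv for L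
    intro v
    have : φ.symm (1, (φ (1, v)).2) = (1, v) := by
      rw [← hφ1 v]; exact φ.symm_apply_apply _
    show (φ.symm (1, (φ (1, v)).2)).2 = v
    rw [this]
  · -- right_inv for L
    intro w
    have : φ (1, (φ.symm (1, w)).2) = (1, w) := by
      rw [← hφ1' w]; exact φ.apply_symm_apply _
    show (φ (1, (φ.symm (1, w)).2)).2 = w
    rw [this]
  · -- map_mul for L
    intro v w
    show (φ ((1:G), v*w)).2 = (φ (1,v)).2 * (φ (1,w)).2
    have : ((1 : G), v * w) = ((1 : G), v) * (1, w) := by simp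
    rw [this, map_mul]; rfl
  · -- main identity
    intro g v
    have : ((g : G), v) = (g, (1 : A)) * (1, v) := by simp
    rw [this, map_mul]
    ext
    · simp [h1 v]
    · rfl
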